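/- For nonnegative integers i ≤ m, sum_{s=i}^{m} (-1)^s/(s+1) * binom(s,i)*binom(i,m-s) = (-1)^m / ((m+1)*binom(m,i)). -/

import Mathlib

open Finset

private lemma lemD : ∀ (i m : ℕ), i ≤ m →
    ∑ t ∈ range (m+1), (-1:ℚ)^t * (Nat.choose i t : ℚ) * (Nat.choose (m-t) i : ℚ) = 1 := by
  intro i
  induction i with
  | zero =>
    intro m _
    rw [Finset.sum_eq_single 0]
    · simp
    · intro t _ ht
      have h0 : Nat.choose 0 t = 0 := Nat.choose_eq_zero_of_lt (Nat.pos_of_ne_zero ht)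
      simp [h0]
    · intro hn; exact absurd (Finset.mem_range.2 (Nat.succ_pos m)) hn
  | succ i ih =>
    intro m hm
    have hT1 : ∑ t ∈ range m, ((-1:ℚ)^t * (Nat.choose i t : ℚ) * (Nat.choose (m-(t+1)) i : ℚ)) = 1 := by
      have h' := ih (m-1) (by omega)
      have hm' : m - 1 + 1 = m := by omega
      rw [hm'] at h'
      calc ∑ t ∈ range m, ((-1:ℚ)^t * (Nat.choose i t : ℚ) * (Nat.choose (m-(t+1)) i : ℚ))
          = ∑ t ∈ range m, ((-1:ℚ)^t * (Nat.choose i t : ℚ) * (Nat.choose (m-1-t) i : ℚ)) := by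
            apply Finset.sum_congr rfl
            intro t _
            have he : m - (t+1) = m - 1 - t := by omega
            rw [he]
        _ = 1 := h' 
    -- main computation
    rw [Finset.sum_range_succ']
    have h1 : ∀ t ∈ range m, (-1:ℚ)^(t+1) * (Nat.choose (i+1) (t+1) : ℚ) * (Nat.choose (m-(t+1)) (i+1) : ℚ)
        = -((-1:ℚ)^t * (Nat.choose i t : ℚ) * (Nat.choose (m-(t+1)) (i+1) : ℚ))
          - ((-1:ℚ)^t * (Nat.choose i (t+1) : ℚ) * (Nat.choose (m-(t+1)) (i+1) : ℚ)) := by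
      intro t _
      rw [Nat.choose_succ_succ]
      push_cast
      ring
    rw [Finset.sum_congr rfl h1]
    have hG : ∑ u ∈ range (m+1), (-1:ℚ)^u * (Nat.choose i u : ℚ) * (Nat.choose (m-u) (i+1) : ℚ)
        = -(∑ t ∈ range m, (-1:ℚ)^t * (Nat.choose i (t+1) : ℚ) * (Nat.choose (m-(t+1)) (i+1) : ℚ))
          + (Nat.choose m (i+1) : ℚ) := by
      rw [Finset.sum_range_succ']
      rw [← Finset.sum_neg_distrib]
      congr 1
      · apply Finset.sum_congr rfl
        intro t _
        ring
      · simp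
    have hGtop : ∑ u ∈ range (m+1), (-1:ℚ)^u * (Nat.choose i u : ℚ) * (Nat.choose (m-u) (i+1) : ℚ)
        = ∑ u ∈ range m, (-1:ℚ)^u * (Nat.choose i u : ℚ) * (Nat.choose (m-u) (i+1) : ℚ) := by
      rw [Finset.sum_range_succ]
      simp
    have hTel : ∑ u ∈ range m, (-1:ℚ)^u * (Nat.choose i u : ℚ) * (Nat.choose (m-u) (i+1) : ℚ)
        - ∑ t ∈ range m, (-1:ℚ)^t * (Nat.choose i t : ℚ) * (Nat.choose (m-(t+1)) (i+1) : ℚ)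
        = ∑ t ∈ range m, (-1:ℚ)^t * (Nat.choose i t : ℚ) * (Nat.choose (m-(t+1)) i : ℚ) := by
      rw [← Finset.sum_sub_distrib]
      apply Finset.sum_congr rfl
      intro t ht
      have htm : t < m := Finset.mem_range.1 ht
      have hmt : m - t = (m - (t+1)) + 1 := by omega
      rw [hmt, Nat.choose_succ_succ]
      push_cast
      ring
    rw [Finset.sum_sub_distrib]
    simp only [pow_zero, Nat.choose_zero_right, Nat.cast_one, one_mul, Nat.sub_zero, mul_one]
    rw [Finset.sum_neg_distrib]
    linarith [hG, hGtop, hTel, hT1]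

private lemma lemB (i m : ℕ) (h : i ≤ m) :
    ∑ s ∈ range (m+1), (-1:ℚ)^s * (Nat.choose s i : ℚ) * (Nat.choose i (m-s) : ℚ) = (-1)^m := by
  rw [← Finset.sum_range_reflect]
  have hcg : ∀ j ∈ range (m+1),
      (-1:ℚ)^(m+1-1-j) * (Nat.choose (m+1-1-j) i : ℚ) * (Nat.choose i (m-(m+1-1-j)) : ℚ)
      = (-1:ℚ)^m * ((-1:ℚ)^j * (Nat.choose i j : ℚ) * (Nat.choose (m-j) i : ℚ)) := by
    intro j hj
    have hjm : j ≤ m := by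
      have := Finset.mem_range.1 hj; omega
    have e1 : m + 1 - 1 - j = m - j := by omega
    have e2 : m - (m - j) = j := by omega
    rw [e1, e2]
    have hsq : (-1:ℚ)^j * (-1:ℚ)^j = 1 := by
      rw [← mul_pow]; norm_num
    have e3 : (-1:ℚ)^(m-j) = (-1:ℚ)^m * (-1:ℚ)^j := by
      calc (-1:ℚ)^(m-j) = (-1:ℚ)^(m-j) * ((-1:ℚ)^j * (-1:ℚ)^j) := by rw [hsq, mul_one]
        _ = ((-1:ℚ)^(m-j) * (-1:ℚ)^j) * (-1:ℚ)^j := by ring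
        _ = (-1:ℚ)^m * (-1:ℚ)^j := by rw [← pow_add, Nat.sub_add_cancel hjm]
    rw [e3]
    ring
  rw [Finset.sum_congr rfl hcg, ← Finset.mul_sum, lemD i m h, mul_one]

private lemma hptwise (i s m : ℕ) (hsm : s ≤ m) :
    ((m:ℚ)+1-(s:ℚ)) * (Nat.choose i (m+1-s) : ℚ) = ((i:ℚ)-(m:ℚ)+(s:ℚ)) * (Nat.choose i (m-s) : ℚ) := by
  obtain ⟨k, rfl⟩ : ∃ k, m = s + k := ⟨m - s, by omega⟩
  have h1 : s + k + 1 - s = k + 1 := by omega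
  have h2 : s + k - s = k := by omega
  rw [h1, h2]
  push_cast
  by_cases hk : k ≤ i
  · have h4 := Nat.choose_succ_right_eq i k
    have h6 : (Nat.choose i (k+1) : ℚ) * ((k:ℚ)+1) = (Nat.choose i k : ℚ) * ((i:ℚ)-(k:ℚ)) := by
      have h5 := congrArg (Nat.cast : ℕ → ℚ) h4
      push_cast [Nat.cast_sub hk] at h5
      exact h5
    linear_combination h6
  · have hz1 : Nat.choose i k = 0 := Nat.choose_eq_zero_of_lt (by omega)
    have hz2 : Nat.choose i (k+1) = 0 := Nat.choose_eq_zero_of_lt (by omega)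
    simp [hz1, hz2]

theorem stmt_19 (i m : ℕ) (h : i ≤ m) :
    ∑ s ∈ Finset.Icc i m,
        (-1 : ℚ) ^ s / ((s : ℚ) + 1) * (Nat.choose s i : ℚ) * (Nat.choose i (m - s) : ℚ) =
      (-1 : ℚ) ^ m / (((m : ℚ) + 1) * (Nat.choose m i : ℚ)) := by
  have hIcc : ∀ (n : ℕ), i ≤ n →
      (∑ s ∈ Finset.Icc i n, (-1:ℚ)^s / ((s:ℚ)+1) * (Nat.choose s i : ℚ) * (Nat.choose i (n-s) : ℚ))
      = ∑ s ∈ range (n+1), (-1:ℚ)^s / ((s:ℚ)+1) * (Nat.choose s i : ℚ) * (Nat.choose i (n-s) : ℚ) := by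
    intro n hn
    apply Finset.sum_subset
    · intro s hs
      have := Finset.mem_Icc.1 hs
      exact Finset.mem_range.2 (by omega)
    · intro s hs hns
      have hsi : s < i := by
        have h1 := Finset.mem_range.1 hs
        by_contra hc
        exact hns (Finset.mem_Icc.2 (by omega))
      simp [Nat.choose_eq_zero_of_lt hsi]
  rw [hIcc m h]
  induction m, h using Nat.le_induction with
  | base =>
    rw [Finset.sum_eq_single i]
    · simp [Nat.choose_self, Nat.sub_self]
    · intro s hs hsne
      have hsi : s < i := by
        have := Finset.mem_range.1 hs; omega
      simp [Nat.choose_eq_zero_of_lt hsi]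
    · intro hn; exact absurd (Finset.mem_range.2 (by omega)) hn
  | succ m hm ih =>
    have hB1 : ∑ s ∈ range (m+1+1), (-1:ℚ)^s * (Nat.choose s i : ℚ) * (Nat.choose i (m+1-s) : ℚ) = (-1)^(m+1) :=
      lemB i (m+1) (by omega)
    have hB0 : ∑ s ∈ range (m+1), (-1:ℚ)^s * (Nat.choose s i : ℚ) * (Nat.choose i (m-s) : ℚ) = (-1)^m :=
      lemB i m hm
    have key : ((m:ℚ)+2) * (∑ s ∈ range (m+1+1), (-1:ℚ)^s / ((s:ℚ)+1) * (Nat.choose s i : ℚ) * (Nat.choose i (m+1-s) : ℚ))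
        = ((i:ℚ)-(m:ℚ)-1) * ((-1:ℚ)^m / (((m:ℚ)+1) * (Nat.choose m i : ℚ))) := by
      rw [Finset.mul_sum]
      have step1 : ∀ s ∈ range (m+1+1),
          ((m:ℚ)+2) * ((-1:ℚ)^s / ((s:ℚ)+1) * (Nat.choose s i : ℚ) * (Nat.choose i (m+1-s) : ℚ))
          = (-1:ℚ)^s * (Nat.choose s i : ℚ) * (Nat.choose i (m+1-s) : ℚ)
            + ((-1:ℚ)^s * (Nat.choose s i : ℚ)) * ((((m:ℚ)+1-(s:ℚ)) * (Nat.choose i (m+1-s) : ℚ)) / ((s:ℚ)+1)) := by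
        intro s _
        have hs0 : (s:ℚ)+1 ≠ 0 := by positivity
        field_simp
        ring
      rw [Finset.sum_congr rfl step1, Finset.sum_add_distrib, hB1]
      have h2 : ∑ s ∈ range (m+1+1),
          ((-1:ℚ)^s * (Nat.choose s i : ℚ)) * ((((m:ℚ)+1-(s:ℚ)) * (Nat.choose i (m+1-s) : ℚ)) / ((s:ℚ)+1))
          = ∑ s ∈ range (m+1),
            ((-1:ℚ)^s * (Nat.choose s i : ℚ) * (Nat.choose i (m-s) : ℚ)
              + ((i:ℚ)-(m:ℚ)-1) * ((-1:ℚ)^s / ((s:ℚ)+1) * (Nat.choose s i : ℚ) * (Nat.choose i (m-s) : ℚ))) := by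
        rw [Finset.sum_range_succ]
        have hlast : ((m:ℚ)+1-((m+1:ℕ):ℚ)) = 0 := by push_cast; ring
        rw [hlast]
        simp only [zero_mul, mul_zero, zero_div, add_zero]
        apply Finset.sum_congr rfl
        intro s hs
        have hsm : s ≤ m := by
          have := Finset.mem_range.1 hs; omega
        have hs0 : (s:ℚ)+1 ≠ 0 := by positivity
        rw [hptwise i s m hsm]
        field_simp
        ring
      rw [h2, Finset.sum_add_distrib, ← Finset.mul_sum, hB0, ih]
      ring
    -- now conclude
    have hm2 : ((m:ℚ)+2) ≠ 0 := by positivity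
    have hm1 : ((m:ℚ)+1) ≠ 0 := by positivity
    have hc0 : (Nat.choose m i : ℚ) ≠ 0 := Nat.cast_ne_zero.2 (Nat.choose_pos hm).ne'
    have hc1 : (Nat.choose (m+1) i : ℚ) ≠ 0 :=
      Nat.cast_ne_zero.2 (Nat.choose_pos (show i ≤ m+1 by omega)).ne' 
    have hrel : (Nat.choose m i : ℚ) * ((m:ℚ)+1) = (Nat.choose (m+1) i : ℚ) * ((m:ℚ)+1-(i:ℚ)) := by
      have h4 := congrArg (Nat.cast : ℕ → ℚ) (Nat.choose_mul_succ_eq m i)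
      push_cast [Nat.cast_sub (by omega : i ≤ m + 1)] at h4
      exact h4
    have hP : (∑ s ∈ range (m+1+1), (-1:ℚ)^s / ((s:ℚ)+1) * (Nat.choose s i : ℚ) * (Nat.choose i (m+1-s) : ℚ))
        = ((i:ℚ)-(m:ℚ)-1) * ((-1:ℚ)^m / (((m:ℚ)+1) * (Nat.choose m i : ℚ))) / ((m:ℚ)+2) := by
      rw [eq_div_iff hm2, mul_comm]
      exact key
    rw [hP]
    push_cast
    rw [div_eq_div_iff (by positivity) (by
      have : (0:ℚ) < (Nat.choose (m+1) i : ℚ) := by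
        exact_mod_cast Nat.choose_pos (show i ≤ m+1 by omega)
      push_cast at this ⊢
      nlinarith)]
    field_simp
    linear_combination (((m:ℚ)+2) * (-1:ℚ)^m) * hrel
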